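/- Let U₁ = (M₁, 𝓕₁) and U₂ = (M₂, 𝓕₂) be complete deterministic Muller acceptors over the same finite alphabet with finite state sets. Then ⟦U₁⟧ ⊆ ⟦U₂⟧ if and only if for every reachable SCC C of the product automaton M₁ × M₂, π₁(C) ∈ 𝓕₁ implies π₂(C) ∈ 𝓕₂. Moreover, if ⟦U₁⟧ is not a subset of ⟦U₂⟧, then there exist u ∈ Σ* and v ∈ Σ⁺ such that the ultimately periodic ω-word u(v)^ω is in ⟦U₁⟧ \ ⟦U₂⟧. -/

import Mathlib

open Filter

/-- Extended transition function: `dstar δ q x` is the state reached from `q` reading `x`. -/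
def dstar {Q A : Type*} (δ : Q → A → Q) (q : Q) (x : List A) : Q := x.foldl δ q

/-- The run of a deterministic automaton on an ω-word from state `q`. -/
def run {Q A : Type*} (δ : Q → A → Q) (q : Q) (w : ℕ → A) : ℕ → Q
  | 0 => q
  | n + 1 => δ (run δ q w n) (w n)

/-- The set of states visited infinitely often by the run on `w` from `q`. -/
def infOcc {Q A : Type*} (δ : Q → A → Q) (q : Q) (w : ℕ → A) : Set Q :=
  {p | ∃ᶠ n in atTop, run δ q w n = p}

/-- `C` is a strongly connected component of the automaton with transitions `δ`. -/
def IsSCC {Q A : Type*} (δ : Q → A → Q) (C : Set Q) : Prop :=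
  C.Nonempty ∧ ∀ q₁ ∈ C, ∀ q₂ ∈ C, ∃ x : List A, x ≠ [] ∧ dstar δ q₁ x = q₂ ∧
    ∀ x', x' <+: x → dstar δ q₁ x' ∈ C

/-- `q` is reachable from the initial state `qι`. -/
def Reachable {Q A : Type*} (δ : Q → A → Q) (qι q : Q) : Prop :=
  ∃ x : List A, dstar δ qι x = q

/-- The ultimately periodic ω-word `u(v)^ω`. -/
def upWord {A : Type*} (u v : List A) (hv : v ≠ []) : ℕ → A := fun n =>
  if h : n < u.length then u[n]
  else v[(n - u.length) % v.length]'(Nat.mod_lt _ (List.length_pos_iff.mpr hv))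

/-- The transition function of the product automaton. -/
def prodStep {Q₁ Q₂ A : Type*} (δ₁ : Q₁ → A → Q₁) (δ₂ : Q₂ → A → Q₂) :
    Q₁ × Q₂ → A → Q₁ × Q₂ := fun p a => (δ₁ p.1 a, δ₂ p.2 a)

/-- The ω-word `x·z` obtained by prepending the finite word `x` to `z`. -/
def prepend {A : Type*} (x : List A) (z : ℕ → A) : ℕ → A := fun n =>
  if h : n < x.length then x[n] else z (n - x.length)

section Aux

variable {Q A Q₁ Q₂ : Type*}

lemma dstar_append (δ : Q → A → Q) (q : Q) (x y : List A) :
    dstar δ q (x ++ y) = dstar δ (dstar δ q x) y :=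
  List.foldl_append

lemma run_eq_dstar (δ : Q → A → Q) (q : Q) (w : ℕ → A) (n : ℕ) :
    run δ q w n = dstar δ q ((List.range n).map w) := by
  induction n with
  | zero => rfl
  | succ n ih =>
    rw [List.range_succ, List.map_append, dstar_append]
    simp [run, ih, dstar]

lemma run_add (δ : Q → A → Q) (q : Q) (w : ℕ → A) (m k : ℕ) :
    run δ q w (m + k) = dstar δ (run δ q w m) ((List.range k).map (fun i => w (m + i))) := by
  rw [run_eq_dstar, run_eq_dstar, List.range_add, List.map_append, dstar_append, List.map_map]
  rfl

lemma freq_pigeonhole [Finite Q] (f : ℕ → Q) (S : Set Q)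
    (h : ∃ᶠ n in atTop, f n ∈ S) : ∃ p ∈ S, ∃ᶠ n in atTop, f n = p := by
  by_contra hc
  push_neg at hc
  have hfin : {n | f n ∈ S}.Finite := by
    have hsub : {n | f n ∈ S} ⊆ ⋃ p ∈ S, {n | f n = p} := by
      intro n hn; exact Set.mem_biUnion hn rfl
    refine Set.Finite.subset (Set.Finite.biUnion (Set.toFinite S) fun p hp => ?_) hsub
    rw [← Set.not_infinite, ← Nat.frequently_atTop_iff_infinite]
    exact not_frequently.2 (hc p hp)
  rw [Nat.frequently_atTop_iff_infinite] at h
  exact h hfin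

lemma eventually_mem_infOcc [Finite Q] (δ : Q → A → Q) (q : Q) (w : ℕ → A) :
    ∀ᶠ n in atTop, run δ q w n ∈ infOcc δ q w := by
  by_contra h
  rw [not_eventually] at h
  obtain ⟨p, hp, hfp⟩ := freq_pigeonhole (run δ q w) (infOcc δ q w)ᶜ h
  exact hp hfp

lemma infOcc_nonempty [Finite Q] (δ : Q → A → Q) (q : Q) (w : ℕ → A) :
    (infOcc δ q w).Nonempty := by
  obtain ⟨p, _, hp⟩ := freq_pigeonhole (run δ q w) Set.univ (by
    simp [Filter.frequently_atTop]; intro a; exact ⟨a, le_refl a⟩)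
  exact ⟨p, hp⟩

lemma infOcc_isSCC [Finite Q] (δ : Q → A → Q) (q : Q) (w : ℕ → A) :
    IsSCC δ (infOcc δ q w) := by
  refine ⟨infOcc_nonempty δ q w, ?_⟩
  intro p₁ hp₁ p₂ hp₂
  obtain ⟨N, hN⟩ := (eventually_atTop).1 (eventually_mem_infOcc δ q w)
  obtain ⟨m, hmN, hm⟩ := frequently_atTop.1 hp₁ N
  obtain ⟨n, hmn, hn⟩ := frequently_atTop.1 hp₂ (m + 1)
  refine ⟨(List.range (n - m)).map (fun i => w (m + i)), ?_, ?_, ?_⟩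
  · simp; omega
  · rw [← hm, ← run_add]
    rw [show m + (n - m) = n by omega]; exact hn
  · intro x' hx'
    rw [List.prefix_iff_eq_take] at hx'
    set j := x'.length with hj
    have hjle : j ≤ n - m := by
      rw [hx'] at hj
      simp at hj ⊢; omega
    rw [hx', ← List.map_take, List.take_range, min_eq_left hjle, ← hm, ← run_add]
    exact hN (m + j) (by omega)

lemma run_prod (δ₁ : Q₁ → A → Q₁) (δ₂ : Q₂ → A → Q₂) (q₁ : Q₁) (q₂ : Q₂)
    (w : ℕ → A) (n : ℕ) :
    run (prodStep δ₁ δ₂) (q₁, q₂) w n = (run δ₁ q₁ w n, run δ₂ q₂ w n) := by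
  induction n with
  | zero => rfl
  | succ n ih => simp [run, ih, prodStep]

lemma infOcc_prod_fst [Finite Q₁] [Finite Q₂] (δ₁ : Q₁ → A → Q₁) (δ₂ : Q₂ → A → Q₂)
    (q₁ : Q₁) (q₂ : Q₂) (w : ℕ → A) :
    Prod.fst '' infOcc (prodStep δ₁ δ₂) (q₁, q₂) w = infOcc δ₁ q₁ w := by
  apply Set.Subset.antisymm
  · rintro _ ⟨⟨p, r⟩, hp, rfl⟩
    refine hp.mono fun n hn => ?_
    rw [run_prod] at hn
    exact congrArg Prod.fst hn
  · intro p hp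
    have h : ∃ᶠ n in atTop, run (prodStep δ₁ δ₂) (q₁, q₂) w n ∈ {r : Q₁ × Q₂ | r.1 = p} := by
      refine hp.mono fun n hn => ?_
      simp [run_prod, hn]
    obtain ⟨r, hr, hfr⟩ := freq_pigeonhole _ _ h
    exact ⟨r, hfr, hr⟩

lemma infOcc_prod_snd [Finite Q₁] [Finite Q₂] (δ₁ : Q₁ → A → Q₁) (δ₂ : Q₂ → A → Q₂)
    (q₁ : Q₁) (q₂ : Q₂) (w : ℕ → A) :
    Prod.snd '' infOcc (prodStep δ₁ δ₂) (q₁, q₂) w = infOcc δ₂ q₂ w := by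
  apply Set.Subset.antisymm
  · rintro _ ⟨⟨p, r⟩, hp, rfl⟩
    refine hp.mono fun n hn => ?_
    rw [run_prod] at hn
    exact congrArg Prod.snd hn
  · intro p hp
    have h : ∃ᶠ n in atTop, run (prodStep δ₁ δ₂) (q₁, q₂) w n ∈ {r : Q₁ × Q₂ | r.2 = p} := by
      refine hp.mono fun n hn => ?_
      simp [run_prod, hn]
    obtain ⟨r, hr, hfr⟩ := freq_pigeonhole _ _ h
    exact ⟨r, hfr, hr⟩

/-- The tour lemma: a word from `c0` through all of a given list, back to `c0`. -/
lemma scc_tour_aux (δ : Q → A → Q) {C : Set Q} (hC : IsSCC δ C) {c0 : Q} (hc0 : c0 ∈ C)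
    (l : List Q) (hl : ∀ p ∈ l, p ∈ C) :
    ∀ d ∈ C, ∃ x : List A, x ≠ [] ∧ dstar δ d x = c0 ∧
      (∀ j, dstar δ d (x.take j) ∈ C) ∧
      ∀ p ∈ l, ∃ j ≤ x.length, dstar δ d (x.take j) = p := by
  induction l with
  | nil =>
    intro d hd
    obtain ⟨x, hne, hx, hpre⟩ := hC.2 d hd c0 hc0
    exact ⟨x, hne, hx, fun j => hpre _ (List.take_prefix j x), by simp⟩
  | cons p l ih =>
    intro d hd
    have hp : p ∈ C := hl p List.mem_cons_self
    obtain ⟨x₁, hne₁, hx₁, hpre₁⟩ := hC.2 d hd p hp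
    obtain ⟨x₂, hne₂, hx₂, hpre₂, hcov₂⟩ := ih (fun q hq => hl q (List.mem_cons_of_mem p hq)) p hp
    have key : ∀ j, dstar δ d ((x₁ ++ x₂).take j)
        = dstar δ (dstar δ d (x₁.take j)) (x₂.take (j - x₁.length)) := by
      intro j
      rw [List.take_append, dstar_append]
    refine ⟨x₁ ++ x₂, by simp [hne₁], ?_, ?_, ?_⟩
    · rw [dstar_append, hx₁, hx₂]
    · intro j
      rw [key]
      rcases le_or_gt j x₁.length with hj | hj
      · rw [show j - x₁.length = 0 by omega]
        exact hpre₁ _ (List.take_prefix j x₁)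
      · rw [List.take_of_length_le (le_of_lt hj), hx₁]
        exact hpre₂ _
    · intro p' hp'
      rcases List.mem_cons.1 hp' with rfl | hp'
      · refine ⟨x₁.length, by simp, ?_⟩
        rw [key, List.take_length, Nat.sub_self, List.take_zero, hx₁]
        rfl
      · obtain ⟨j₂, hj₂, hj₂e⟩ := hcov₂ p' hp'
        refine ⟨x₁.length + j₂, by simp; omega, ?_⟩
        rw [key, List.take_of_length_le (by omega), hx₁,
          show x₁.length + j₂ - x₁.length = j₂ by omega, hj₂e]

lemma scc_tour [Finite Q] (δ : Q → A → Q) {C : Set Q} (hC : IsSCC δ C) {c0 : Q} (hc0 : c0 ∈ C) :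
    ∃ v : List A, v ≠ [] ∧ dstar δ c0 v = c0 ∧
      (∀ j, dstar δ c0 (v.take j) ∈ C) ∧
      ∀ p ∈ C, ∃ j ≤ v.length, dstar δ c0 (v.take j) = p := by
  have hfin := Set.toFinite C
  obtain ⟨v, hne, hv, hpre, hcov⟩ := scc_tour_aux δ hC hc0 hfin.toFinset.toList
    (fun p hp => by simpa using hp) c0 hc0
  exact ⟨v, hne, hv, hpre, fun p hp => hcov p (by simpa using hp)⟩

/-- For a reachable SCC `C`, there is an ultimately periodic word whose
infinitely-occurring set is exactly `C`. -/
lemma exists_upWord_infOcc [Finite Q] (δ : Q → A → Q) (qι : Q) {C : Set Q}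
    (hC : IsSCC δ C) (hreach : ∀ p ∈ C, Reachable δ qι p) :
    ∃ (u v : List A) (hv : v ≠ []), infOcc δ qι (upWord u v hv) = C := by
  obtain ⟨c0, hc0⟩ := hC.1
  obtain ⟨u, hu⟩ := hreach c0 hc0
  obtain ⟨v, hvne, hv, hpre, hcov⟩ := scc_tour δ hC hc0
  refine ⟨u, v, hvne, ?_⟩
  set w := upWord u v hvne with hw
  have hvpos : 0 < v.length := List.length_pos_iff.mpr hvne
  -- letters of each period
  have letters : ∀ m j, j ≤ v.length →
      (List.range j).map (fun i => w (u.length + m * v.length + i)) = v.take j := by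
    intro m j hj
    apply List.ext_getElem
    · simp; omega
    · intro i h1 h2
      simp only [List.getElem_map, List.getElem_range, List.getElem_take]
      have hiv : i < v.length := by simp at h1; omega
      rw [hw, upWord]
      rw [dif_neg (by omega)]
      congr 1
      rw [show u.length + m * v.length + i - u.length = m * v.length + i by omega,
        Nat.mul_comm m v.length, Nat.mul_add_mod, Nat.mod_eq_of_lt hiv]
  -- run at the start of each period
  have base : run δ qι w u.length = c0 := by
    rw [run_eq_dstar]
    have : (List.range u.length).map w = u := by
      apply List.ext_getElem
      · simp
      · intro i h1 h2
        simp only [List.getElem_map, List.getElem_range]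
        rw [hw, upWord, dif_pos (by simpa using h1)]
    rw [this, hu]
  have periodic : ∀ m, run δ qι w (u.length + m * v.length) = c0 := by
    intro m
    induction m with
    | zero => simpa using base
    | succ m ih =>
      have : u.length + (m + 1) * v.length = (u.length + m * v.length) + v.length := by ring
      rw [this, run_add, ih, letters m v.length le_rfl, List.take_length, hv]
  have stage : ∀ m j, j ≤ v.length →
      run δ qι w (u.length + m * v.length + j) = dstar δ c0 (v.take j) := by
    intro m j hj
    rw [run_add, periodic, letters m j hj]
  apply Set.Subset.antisymm
  · intro p hp
    obtain ⟨n, hn, hrn⟩ := frequently_atTop.1 hp u.length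
    set k := n - u.length with hk
    have hdm := Nat.div_add_mod k v.length
    have hmul : (k / v.length) * v.length = v.length * (k / v.length) := Nat.mul_comm _ _
    have hn' : n = u.length + (k / v.length) * v.length + k % v.length := by omega
    have hjv : k % v.length < v.length := Nat.mod_lt _ hvpos
    rw [hn', stage _ _ (le_of_lt hjv)] at hrn
    rw [← hrn]; exact hpre _
  · intro p hp
    obtain ⟨j, hj, hje⟩ := hcov p hp
    show ∃ᶠ n in atTop, run δ qι w n = p
    rw [frequently_atTop]
    intro b
    refine ⟨u.length + b * v.length + j, ?_, ?_⟩
    · have : b ≤ b * v.length := Nat.le_mul_of_pos_right b hvpos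
      omega
    · rw [stage b j hj, hje]

end Aux

/-- Inclusion of DMAs holds iff for every reachable SCC `C` of the product, `π₁ C ∈ 𝓕₁`
implies `π₂ C ∈ 𝓕₂`; non-inclusion is witnessed by an ultimately periodic word. -/
theorem stmt13 {A Q₁ Q₂ : Type*} [Fintype A] [Fintype Q₁] [Fintype Q₂]
    (δ₁ : Q₁ → A → Q₁) (q₁ : Q₁) (𝓕₁ : Set (Set Q₁))
    (δ₂ : Q₂ → A → Q₂) (q₂ : Q₂) (𝓕₂ : Set (Set Q₂)) :
    ({w : ℕ → A | infOcc δ₁ q₁ w ∈ 𝓕₁} ⊆ {w | infOcc δ₂ q₂ w ∈ 𝓕₂} ↔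
      ∀ C : Set (Q₁ × Q₂), IsSCC (prodStep δ₁ δ₂) C →
        (∀ p ∈ C, Reachable (prodStep δ₁ δ₂) (q₁, q₂) p) →
        Prod.fst '' C ∈ 𝓕₁ → Prod.snd '' C ∈ 𝓕₂) ∧
    (¬ ({w : ℕ → A | infOcc δ₁ q₁ w ∈ 𝓕₁} ⊆ {w | infOcc δ₂ q₂ w ∈ 𝓕₂}) →
      ∃ (u v : List A) (hv : v ≠ []),
        infOcc δ₁ q₁ (upWord u v hv) ∈ 𝓕₁ ∧ infOcc δ₂ q₂ (upWord u v hv) ∉ 𝓕₂) := by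
  have main : ∀ C : Set (Q₁ × Q₂), IsSCC (prodStep δ₁ δ₂) C →
      (∀ p ∈ C, Reachable (prodStep δ₁ δ₂) (q₁, q₂) p) →
      ∃ (u v : List A) (hv : v ≠ []),
        infOcc δ₁ q₁ (upWord u v hv) = Prod.fst '' C ∧
        infOcc δ₂ q₂ (upWord u v hv) = Prod.snd '' C := by
    intro C hC hreach
    obtain ⟨u, v, hv, hio⟩ := exists_upWord_infOcc (prodStep δ₁ δ₂) (q₁, q₂) hC hreach
    exact ⟨u, v, hv, by rw [← infOcc_prod_fst δ₁ δ₂ q₁ q₂, hio],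
      by rw [← infOcc_prod_snd δ₁ δ₂ q₁ q₂, hio]⟩
  have fwd : ({w : ℕ → A | infOcc δ₁ q₁ w ∈ 𝓕₁} ⊆ {w | infOcc δ₂ q₂ w ∈ 𝓕₂} ↔
      ∀ C : Set (Q₁ × Q₂), IsSCC (prodStep δ₁ δ₂) C →
        (∀ p ∈ C, Reachable (prodStep δ₁ δ₂) (q₁, q₂) p) →
        Prod.fst '' C ∈ 𝓕₁ → Prod.snd '' C ∈ 𝓕₂) := by
    constructor
    · intro h C hC hreach h1
      obtain ⟨u, v, hv, e1, e2⟩ := main C hC hreach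
      have := h (show upWord u v hv ∈ _ from by rw [Set.mem_setOf_eq, e1]; exact h1)
      rwa [Set.mem_setOf_eq, e2] at this
    · intro h w hw
      set C := infOcc (prodStep δ₁ δ₂) (q₁, q₂) w with hCdef
      have hSCC := infOcc_isSCC (prodStep δ₁ δ₂) (q₁, q₂) w
      have hreach : ∀ p ∈ C, Reachable (prodStep δ₁ δ₂) (q₁, q₂) p := by
        intro p hp
        obtain ⟨n, _, hn⟩ := frequently_atTop.1 hp 0
        exact ⟨(List.range n).map w, by rw [← run_eq_dstar]; exact hn⟩
      have h1 : Prod.fst '' C ∈ 𝓕₁ := by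
        rw [hCdef, infOcc_prod_fst]; exact hw
      have h2 := h C hSCC hreach h1
      rwa [hCdef, infOcc_prod_snd] at h2
  refine ⟨fwd, ?_⟩
  intro hninc
  rw [fwd] at hninc
  push_neg at hninc
  obtain ⟨C, hC, hreach, h1, h2⟩ := hninc
  obtain ⟨u, v, hv, e1, e2⟩ := main C hC hreach
  exact ⟨u, v, hv, by rw [e1]; exact h1, by rw [e2]; exact h2⟩
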